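/- Let λ > 0, 0 < T₀⁻ < T_q < T₀⁺, T^±(t) := T_q + (T₀^± − T_q) e^{−λ t}, and Δ(t) := (T⁺(t) − T⁻(t)) − T_q log(T⁺(t)/T⁻(t)). If t* > 0 satisfies T⁺(t*) · T⁻(t*) = T_q², then Δ''(t*) = −(λ² / T_q) (T⁺(t*) − T⁻(t*)) (√(T⁺(t*)) − √(T⁻(t*)))², which is strictly negative; hence every critical point of Δ in (0, ∞) is a strict local maximum. -/

import Mathlib

/-- Auxiliary: the first derivative of the availability difference. -/
noncomputable def gAux (lam Tq T0m T0p : ℝ) (Tp Tm : ℝ → ℝ) : ℝ → ℝ := fun t =>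
  ((T0p - Tq) * (-lam * Real.exp (-lam * t)) - (T0m - Tq) * (-lam * Real.exp (-lam * t))) -
    Tq * ((T0p - Tq) * (-lam * Real.exp (-lam * t)) / Tp t -
      (T0m - Tq) * (-lam * Real.exp (-lam * t)) / Tm t)

/-- At any time `t* > 0` with `T⁺(t*) T⁻(t*) = T_q²`, the second derivative of the
availability difference `Δ` equals
`−(λ²/T_q)(T⁺ − T⁻)(√T⁺ − √T⁻)² < 0`; hence every critical point of `Δ` in `(0, ∞)` is
a strict local maximum. -/
theorem critical_points_are_strict_maxima
    (lam Tq T0m T0p : ℝ) (hlam : 0 < lam)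
    (hT0m : 0 < T0m) (hTm : T0m < Tq) (hTp : Tq < T0p)
    (Tp Tm : ℝ → ℝ)
    (hTpdef : ∀ t, Tp t = Tq + (T0p - Tq) * Real.exp (-lam * t))
    (hTmdef : ∀ t, Tm t = Tq + (T0m - Tq) * Real.exp (-lam * t))
    (Δ : ℝ → ℝ)
    (hΔ : ∀ t, Δ t = (Tp t - Tm t) - Tq * Real.log (Tp t / Tm t))
    (tstar : ℝ) (htstar : 0 < tstar)
    (hcrit : Tp tstar * Tm tstar = Tq ^ 2) :
    deriv (deriv Δ) tstar =
      -(lam ^ 2 / Tq) * (Tp tstar - Tm tstar) *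
        (Real.sqrt (Tp tstar) - Real.sqrt (Tm tstar)) ^ 2 ∧
    deriv (deriv Δ) tstar < 0 ∧
    (∀ᶠ s in nhdsWithin tstar {tstar}ᶜ, Δ s < Δ tstar) := by
  have hTq : 0 < Tq := hT0m.trans hTm
  have ha : (0:ℝ) < T0p - Tq := sub_pos.mpr hTp
  have hb : T0m - Tq < 0 := sub_neg.mpr hTm
  set g := gAux lam Tq T0m T0p Tp Tm with hgdef
  -- exponential derivative
  have hE : ∀ t : ℝ, HasDerivAt (fun s => Real.exp (-lam * s))
      (-lam * Real.exp (-lam * t)) t := by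
    intro t
    have h := (((hasDerivAt_id t).const_mul (-lam)).exp :)
    simpa [mul_comm] using h
  have hTp' : ∀ t, HasDerivAt Tp ((T0p - Tq) * (-lam * Real.exp (-lam * t))) t := by
    intro t
    have h := (((hE t).const_mul (T0p - Tq)).const_add Tq :)
    have hfe : Tp = fun s => Tq + (T0p - Tq) * Real.exp (-lam * s) := funext hTpdef
    rw [hfe]
    simpa [mul_comm] using h
  have hTm' : ∀ t, HasDerivAt Tm ((T0m - Tq) * (-lam * Real.exp (-lam * t))) t := by
    intro t
    have h := (((hE t).const_mul (T0m - Tq)).const_add Tq :)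
    have hfe : Tm = fun s => Tq + (T0m - Tq) * Real.exp (-lam * s) := funext hTmdef
    rw [hfe]
    simpa [mul_comm] using h
  -- positivity
  have hTppos : ∀ t, 0 < Tp t := by
    intro t
    rw [hTpdef t]
    have := Real.exp_pos (-lam * t)
    nlinarith
  have hTmpos : ∀ t, 0 < t → 0 < Tm t := by
    intro t ht
    rw [hTmdef t]
    have h1 : Real.exp (-lam * t) < 1 := by
      rw [Real.exp_lt_one_iff]
      nlinarith
    have h2 := Real.exp_pos (-lam * t)
    nlinarith
  -- Δ has derivative g on (0, ∞)
  have hD : ∀ t, 0 < t → HasDerivAt Δ (g t) t := by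
    intro t ht
    have h1 := (hTp' t).sub (hTm' t)
    have h2 := (((hTp' t).log (hTppos t).ne').sub ((hTm' t).log (hTmpos t ht).ne'))
    have h3 := h1.sub (h2.const_mul Tq)
    have heq : Δ =ᶠ[nhds t]
        fun s => (Tp s - Tm s) - Tq * (Real.log (Tp s) - Real.log (Tm s)) := by
      filter_upwards [isOpen_Ioi.mem_nhds ht] with s hs
      rw [hΔ s, Real.log_div (hTppos s).ne' (hTmpos s hs).ne']
    exact h3.congr_of_eventuallyEq heq
  have hEvEq : deriv Δ =ᶠ[nhds tstar] g := by
    filter_upwards [isOpen_Ioi.mem_nhds htstar] with t ht using (hD t ht).deriv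
  have h2nd : deriv (deriv Δ) tstar = deriv g tstar := hEvEq.deriv_eq
  -- second derivative of Δ at tstar
  have hgG : HasDerivAt g
      (((T0p - Tq) * (-lam * (-lam * Real.exp (-lam * tstar))) -
          (T0m - Tq) * (-lam * (-lam * Real.exp (-lam * tstar)))) -
        Tq * (((T0p - Tq) * (-lam * (-lam * Real.exp (-lam * tstar))) * Tp tstar -
              (T0p - Tq) * (-lam * Real.exp (-lam * tstar)) *
                ((T0p - Tq) * (-lam * Real.exp (-lam * tstar)))) / Tp tstar ^ 2 -
            ((T0m - Tq) * (-lam * (-lam * Real.exp (-lam * tstar))) * Tm tstar -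
              (T0m - Tq) * (-lam * Real.exp (-lam * tstar)) *
                ((T0m - Tq) * (-lam * Real.exp (-lam * tstar)))) / Tm tstar ^ 2)) tstar := by
    have hnum_p : HasDerivAt (fun t => (T0p - Tq) * (-lam * Real.exp (-lam * t)))
        ((T0p - Tq) * (-lam * (-lam * Real.exp (-lam * tstar)))) tstar :=
      ((hE tstar).const_mul (-lam)).const_mul (T0p - Tq)
    have hnum_m : HasDerivAt (fun t => (T0m - Tq) * (-lam * Real.exp (-lam * t)))
        ((T0m - Tq) * (-lam * (-lam * Real.exp (-lam * tstar)))) tstar :=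
      ((hE tstar).const_mul (-lam)).const_mul (T0m - Tq)
    have hq1 := hnum_p.div (hTp' tstar) (hTppos tstar).ne'
    have hq2 := hnum_m.div (hTm' tstar) (hTmpos tstar htstar).ne'
    exact (hnum_p.sub hnum_m).sub ((hq1.sub hq2).const_mul Tq)
  have hGval : deriv g tstar =
      -(lam ^ 2 / Tq) * (Tp tstar - Tm tstar) * (Tp tstar + Tm tstar - 2 * Tq) := by
    rw [hgG.deriv]
    rw [hTpdef tstar, hTmdef tstar] at hcrit ⊢
    have hPne : Tq + (T0p - Tq) * Real.exp (-lam * tstar) ≠ 0 := by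
      have := hTppos tstar; rw [hTpdef tstar] at this; exact this.ne'
    have hMne : Tq + (T0m - Tq) * Real.exp (-lam * tstar) ≠ 0 := by
      have := hTmpos tstar htstar; rw [hTmdef tstar] at this; exact this.ne'
    set E := Real.exp (-lam * tstar) with hEdef
    have hMne' : Tq + E * (T0m - Tq) ≠ 0 := by rwa [mul_comm]
    set_option maxRecDepth 10000 in field_simp
    linear_combination (E * (T0p - T0m) *
      ((Tq + (T0p + T0m - 2 * Tq) * E) *
        ((Tq + (T0p - Tq) * E) * (Tq + (T0m - Tq) * E) + Tq ^ 2) + Tq ^ 3)) * hcrit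
  -- sqrt identity
  have hsqrtmul : Real.sqrt (Tp tstar) * Real.sqrt (Tm tstar) = Tq := by
    rw [← Real.sqrt_mul (hTppos tstar).le, hcrit, Real.sqrt_sq hTq.le]
  have hsq : (Real.sqrt (Tp tstar) - Real.sqrt (Tm tstar)) ^ 2 =
      Tp tstar + Tm tstar - 2 * Tq := by
    linear_combination Real.sq_sqrt (hTppos tstar).le +
      Real.sq_sqrt (hTmpos tstar htstar).le - 2 * hsqrtmul
  -- positivity of the two factors
  have hEpos := Real.exp_pos (-lam * tstar)
  have hdiffpos : 0 < Tp tstar - Tm tstar := by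
    rw [hTpdef tstar, hTmdef tstar]; nlinarith
  have hsumpos : 0 < Tp tstar + Tm tstar - 2 * Tq := by
    rw [hTpdef tstar, hTmdef tstar] at hcrit ⊢
    have key : Tq * ((T0p - Tq) * Real.exp (-lam * tstar) + (T0m - Tq) * Real.exp (-lam * tstar)) =
        ((T0p - Tq) * Real.exp (-lam * tstar)) * (-(T0m - Tq) * Real.exp (-lam * tstar)) := by
      linear_combination hcrit
    have hprod : 0 < ((T0p - Tq) * Real.exp (-lam * tstar)) *
        (-(T0m - Tq) * Real.exp (-lam * tstar)) :=
      mul_pos (mul_pos ha hEpos) (mul_pos (neg_pos.mpr hb) hEpos)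
    nlinarith [key, hprod, hTq]
  have hmain : deriv (deriv Δ) tstar =
      -(lam ^ 2 / Tq) * (Tp tstar - Tm tstar) *
        (Real.sqrt (Tp tstar) - Real.sqrt (Tm tstar)) ^ 2 := by
    rw [h2nd, hGval, hsq]
  have hneg : deriv (deriv Δ) tstar < 0 := by
    rw [hmain, hsq]
    have hc : 0 < lam ^ 2 / Tq := by positivity
    nlinarith [mul_pos (mul_pos hc hdiffpos) hsumpos]
  refine ⟨hmain, hneg, ?_⟩
  -- strict local maximum
  have hg0 : g tstar = 0 := by
    show gAux lam Tq T0m T0p Tp Tm tstar = 0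
    unfold gAux
    rw [hTpdef tstar, hTmdef tstar] at hcrit ⊢
    have hPne : Tq + (T0p - Tq) * Real.exp (-lam * tstar) ≠ 0 := by
      have := hTppos tstar; rw [hTpdef tstar] at this; exact this.ne'
    have hMne : Tq + (T0m - Tq) * Real.exp (-lam * tstar) ≠ 0 := by
      have := hTmpos tstar htstar; rw [hTmdef tstar] at this; exact this.ne'
    set E := Real.exp (-lam * tstar) with hEdef
    have hMne' : Tq + E * (T0m - Tq) ≠ 0 := by rwa [mul_comm]
    field_simp
    linear_combination (-(lam * E * (T0p - T0m))) * hcrit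
  -- slope of g tends to deriv g tstar < 0
  have hGneg : deriv g tstar < 0 := by
    rw [hGval]
    have hc : 0 < lam ^ 2 / Tq := by positivity
    nlinarith [mul_pos (mul_pos hc hdiffpos) hsumpos]
  have hslope : Filter.Tendsto (slope g tstar) (nhdsWithin tstar {tstar}ᶜ)
      (nhds (deriv g tstar)) := by
    rw [← hasDerivAt_iff_tendsto_slope]
    exact hgG.differentiableAt.hasDerivAt
  have hslope_neg : ∀ᶠ s in nhdsWithin tstar {tstar}ᶜ, slope g tstar s < 0 :=
    hslope (Iio_mem_nhds hGneg)
  -- turn the eventual statements into a concrete interval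
  have hnhds : ∀ᶠ s in nhds tstar, (s ≠ tstar → slope g tstar s < 0) ∧ 0 < s := by
    have h1 : ∀ᶠ s in nhds tstar, s ≠ tstar → slope g tstar s < 0 := by
      rw [eventually_nhdsWithin_iff] at hslope_neg
      simpa using hslope_neg
    have h2 : ∀ᶠ s in nhds tstar, 0 < s := eventually_gt_nhds htstar
    exact h1.and h2
  obtain ⟨δ, hδpos, hδ⟩ := Metric.eventually_nhds_iff.mp hnhds
  have hgsign : ∀ s, dist s tstar < δ → s ≠ tstar → g s / (s - tstar) < 0 := by
    intro s hs hne
    have := (hδ hs).1 hne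
    rwa [slope_def_field, hg0, sub_zero] at this
  have hcont : ∀ s ∈ Set.Icc (tstar - δ/2) (tstar + δ/2), ContinuousAt Δ s := by
    intro s hs
    have hs0 : 0 < s := by
      have hd : dist s tstar < δ := by
        rw [Real.dist_eq, abs_lt]
        exact ⟨by linarith [hs.1], by linarith [hs.2]⟩
      exact (hδ hd).2
    exact (hD s hs0).continuousAt
  have hmono : StrictMonoOn Δ (Set.Icc (tstar - δ/2) tstar) := by
    apply strictMonoOn_of_deriv_pos (convex_Icc _ _)
    · exact ContinuousOn.mono (fun s hs => (hcont s hs).continuousWithinAt)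
        (Set.Icc_subset_Icc le_rfl (by linarith))
    · intro x hx
      rw [interior_Icc] at hx
      have hdist : dist x tstar < δ := by
        rw [Real.dist_eq, abs_lt]
        exact ⟨by linarith [hx.1], by linarith [hx.2]⟩
      have hne : x ≠ tstar := hx.2.ne
      have hx0 : 0 < x := (hδ hdist).2
      rw [(hD x hx0).deriv]
      have hsign := hgsign x hdist hne
      rcases div_neg_iff.mp hsign with ⟨h1, h2⟩ | ⟨h1, h2⟩
      · exact h1
      · linarith [sub_neg.mpr hx.2, h2]
  have hanti : StrictAntiOn Δ (Set.Icc tstar (tstar + δ/2)) := by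
    apply strictAntiOn_of_deriv_neg (convex_Icc _ _)
    · exact ContinuousOn.mono (fun s hs => (hcont s hs).continuousWithinAt)
        (Set.Icc_subset_Icc (by linarith) le_rfl)
    · intro x hx
      rw [interior_Icc] at hx
      have hdist : dist x tstar < δ := by
        rw [Real.dist_eq, abs_lt]
        exact ⟨by linarith [hx.1], by linarith [hx.2]⟩
      have hne : x ≠ tstar := hx.1.ne'
      have hx0 : 0 < x := (hδ hdist).2
      rw [(hD x hx0).deriv]
      have hsign := hgsign x hdist hne
      rcases div_neg_iff.mp hsign with ⟨h1, h2⟩ | ⟨h1, h2⟩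
      · linarith [sub_pos.mpr hx.1, h2]
      · exact h1
  rw [eventually_nhdsWithin_iff]
  rw [Metric.eventually_nhds_iff]
  refine ⟨δ/2, by linarith, ?_⟩
  intro s hs hne
  have hne' : s ≠ tstar := hne
  have hdist : |s - tstar| < δ/2 := by rwa [Real.dist_eq] at hs
  obtain ⟨hd1, hd2⟩ := abs_lt.mp hdist
  rcases lt_or_gt_of_ne hne' with hlt | hgt
  · have hsmem : s ∈ Set.Icc (tstar - δ/2) tstar :=
      Set.mem_Icc.mpr ⟨by linarith, hlt.le⟩
    have htmem : tstar ∈ Set.Icc (tstar - δ/2) tstar :=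
      Set.mem_Icc.mpr ⟨by linarith, le_rfl⟩
    exact hmono hsmem htmem hlt
  · have hsmem : s ∈ Set.Icc tstar (tstar + δ/2) :=
      Set.mem_Icc.mpr ⟨hgt.le, by linarith⟩
    have htmem : tstar ∈ Set.Icc tstar (tstar + δ/2) :=
      Set.mem_Icc.mpr ⟨le_rfl, by linarith⟩
    exact hanti htmem hsmem hgt
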